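/- Let {v, w} be an orthonormal basis of ℂ² and let b ∈ {0,1}. Suppose that for every x ∈ {0,1}, measuring H^b|x⟩ in the basis {v,w} yields an outcome with bias at least 1/√2, i.e., | |⟨v, H^b|x⟩⟩|² − |⟨w, H^b|x⟩⟩|² | ≥ 1/√2. Then for every x ∈ {0,1}, measuring H^{b⊕1}|x⟩ in the basis {v,w} yields an outcome with bias at most 1/√2, i.e., | |⟨v, H^{b⊕1}|x⟩⟩|² − |⟨w, H^{b⊕1}|x⟩⟩|² | ≤ 1/√2. -/

import Mathlib

open Complex in
lemma keyreal (a c a' c' : ℂ)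
    (h1 : ‖a‖^2 + ‖a'‖^2 = 1)
    (h2 : ‖c‖^2 + ‖c'‖^2 = 1)
    (h3 : star a * c + star a' * c' = 0)
    (hb : 1/Real.sqrt 2 ≤ |‖a‖^2 - ‖a'‖^2|) :
    |‖a+c‖^2/2 - ‖a'+c'‖^2/2| ≤ 1/Real.sqrt 2 ∧
    |‖a-c‖^2/2 - ‖a'-c'‖^2/2| ≤ 1/Real.sqrt 2 := by
  have ht0 : (0:ℝ) < 1/Real.sqrt 2 := by positivity
  have ht2 : (1/Real.sqrt 2)^2 = 1/2 := by
    rw [div_pow, one_pow, Real.sq_sqrt]; norm_num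
  have hn : ∀ z : ℂ, ‖z‖^2 = Complex.normSq z := fun z => by
    rw [Complex.sq_norm]
  simp only [hn] at h1 h2 hb ⊢
  simp only [Complex.star_def] at h3
  have h3' : (starRingEnd ℂ) a * c = -((starRingEnd ℂ) a' * c') := by
    linear_combination h3
  have hmod : normSq a * normSq c = normSq a' * normSq c' := by
    have := congrArg normSq h3'
    simpa [Complex.normSq_mul, Complex.normSq_conj] using this
  have hsum : normSq a + normSq c = 1 := by
    linear_combination hmod + Complex.normSq c' * h1 + (1 - Complex.normSq a) * h2
  set r : ℝ := (a * (starRingEnd ℂ) c).re with hr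
  have hcross : a' * (starRingEnd ℂ) c' = -(a * (starRingEnd ℂ) c) := by
    have h := congrArg (starRingEnd ℂ) h3'
    simp only [map_mul, map_neg, Complex.conj_conj] at h
    linear_combination h
  have hr' : (a' * (starRingEnd ℂ) c').re = -r := by rw [hcross]; simp [hr]
  have hr2 : r^2 ≤ normSq a * normSq c := by
    have h : r^2 ≤ normSq (a * (starRingEnd ℂ) c) := by
      have := Complex.normSq_apply (a * (starRingEnd ℂ) c)
      nlinarith [sq_nonneg ((a * (starRingEnd ℂ) c).im)]
    simpa [Complex.normSq_mul, Complex.normSq_conj] using h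
  have hbsq : (1:ℝ)/2 ≤ (normSq a - normSq a')^2 := by
    have := pow_le_pow_left₀ ht0.le hb 2
    rw [ht2] at this
    simpa [_root_.sq_abs] using this
  have hpc : normSq c = normSq a' := by linarith
  have h4r : (2*r)^2 ≤ (1/Real.sqrt 2)^2 := by
    have h1sq : (normSq a + normSq a')^2 = 1 := by rw [h1]; norm_num
    have hpapc : normSq a * normSq c = normSq a * normSq a' := by rw [hpc]
    rw [ht2]; nlinarith [hr2, hbsq, h1sq, hpapc]
  have hbound : |2*r| ≤ 1/Real.sqrt 2 := by
    rw [abs_le]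
    constructor <;> nlinarith [h4r, ht0, sq_nonneg (2*r - 1/Real.sqrt 2), sq_nonneg (2*r + 1/Real.sqrt 2)]
  constructor
  · have hE : normSq (a+c)/2 - normSq (a'+c')/2 = 2*r := by
      rw [Complex.normSq_add, Complex.normSq_add, hr']; linarith [hsum, h1, h2]
    rw [hE]; exact hbound
  · have hE : normSq (a-c)/2 - normSq (a'-c')/2 = -(2*r) := by
      rw [Complex.normSq_sub, Complex.normSq_sub, hr']; linarith [hsum, h1, h2]
    rw [hE, abs_neg]; exact hbound

/-- complex-equation version of the key lemma -/
lemma key (a c a' c' : ℂ)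
    (h1 : star a * a + star a' * a' = 1)
    (h2 : star c * c + star c' * c' = 1)
    (h3 : star a * c + star a' * c' = 0)
    (hb : 1/Real.sqrt 2 ≤ |‖a‖^2 - ‖a'‖^2|) :
    |‖a+c‖^2/2 - ‖a'+c'‖^2/2| ≤ 1/Real.sqrt 2 ∧
    |‖a-c‖^2/2 - ‖a'-c'‖^2/2| ≤ 1/Real.sqrt 2 := by
  have conv : ∀ z : ℂ, star z * z = ((‖z‖^2 : ℝ) : ℂ) := fun z => by
    rw [Complex.star_def, mul_comm, Complex.mul_conj, Complex.sq_norm]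
  rw [conv, conv] at h1 h2
  refine keyreal a c a' c' ?_ ?_ h3 hb
  · exact_mod_cast h1
  · exact_mod_cast h2


/-- The 2×2 Hadamard matrix `(1/√2)·[[1,1],[1,-1]]`. -/
noncomputable def Hmat : Matrix (Fin 2) (Fin 2) ℂ :=
  ((1 / Real.sqrt 2 : ℝ) : ℂ) • !![1, 1; 1, -1]

/-- The standard basis vector `|x⟩` of ℂ². -/
def ket (x : Fin 2) : Fin 2 → ℂ := fun i => if i = x then 1 else 0

/-- The inner product `⟨v, ψ⟩` on ℂ² (conjugate-linear in the first argument). -/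
noncomputable def dotc (v ψ : Fin 2 → ℂ) : ℂ :=
  star (v 0) * ψ 0 + star (v 1) * ψ 1

open Matrix

/-- If measuring `H^b|x⟩` in the orthonormal basis `{v, w}` has outcome bias at least
`1/√2` for every `x ∈ {0,1}`, then measuring `H^{b⊕1}|x⟩` in `{v, w}` has outcome
bias at most `1/√2` for every `x ∈ {0,1}`. -/
theorem stmt10 (v w : Fin 2 → ℂ)
    (hv : dotc v v = 1) (hw : dotc w w = 1) (hvw : dotc v w = 0)
    (b : Fin 2)
    (hbig : ∀ x : Fin 2,
      1 / Real.sqrt 2 ≤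
        |‖dotc v ((Hmat ^ (b : ℕ)).mulVec (ket x))‖ ^ 2
          - ‖dotc w ((Hmat ^ (b : ℕ)).mulVec (ket x))‖ ^ 2|) :
    ∀ x : Fin 2,
      |‖dotc v ((Hmat ^ ((b + 1 : Fin 2) : ℕ)).mulVec (ket x))‖ ^ 2
          - ‖dotc w ((Hmat ^ ((b + 1 : Fin 2) : ℕ)).mulVec (ket x))‖ ^ 2|
        ≤ 1 / Real.sqrt 2 := by
  have ht0 : (0:ℝ) < 1/Real.sqrt 2 := by positivity
  have ht2 : (1/Real.sqrt 2)^2 = 1/2 := by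
    rw [div_pow, one_pow, Real.sq_sqrt]; norm_num
  have hs2 : Real.sqrt 2 * Real.sqrt 2 = 2 := Real.mul_self_sqrt (by norm_num)
  simp only [dotc, Complex.star_def] at hv hw hvw
  have hwv : (starRingEnd ℂ) (w 0) * v 0 + (starRingEnd ℂ) (w 1) * v 1 = 0 := by
    have h := congrArg (starRingEnd ℂ) hvw
    simp only [map_add, _root_.map_mul, Complex.conj_conj, map_zero] at h
    linear_combination h
  set M : Matrix (Fin 2) (Fin 2) ℂ := !![star (v 0), star (v 1); star (w 0), star (w 1)] with hM
  have hMM : M * Mᴴ = 1 := by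
    ext i j
    fin_cases i <;> fin_cases j <;>
      simp [hM, Matrix.mul_apply, Fin.sum_univ_two, Matrix.conjTranspose_apply,
        Matrix.one_apply] <;>
      [linear_combination hv; linear_combination hvw; linear_combination hwv;
        linear_combination hw]
  have hMM' : Mᴴ * M = 1 := mul_eq_one_comm.mp hMM
  have hHH : Hmat * Hmatᴴ = 1 := by
    ext i j
    fin_cases i <;> fin_cases j <;>
      simp [Hmat, Matrix.mul_apply, Fin.sum_univ_two, Matrix.conjTranspose_apply,
        Matrix.one_apply, Complex.ext_iff] <;>
      norm_num <;> nlinarith [hs2]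
  have hN : (M * Hmat) * (M * Hmat)ᴴ = 1 := by
    rw [Matrix.conjTranspose_mul, Matrix.mul_assoc, ← Matrix.mul_assoc Hmat, hHH,
      Matrix.one_mul, hMM]
  have hNN : (M * Hmat)ᴴ * (M * Hmat) = 1 := mul_eq_one_comm.mp hN
  have entry : ∀ (A : Matrix (Fin 2) (Fin 2) ℂ), Aᴴ * A = 1 → ∀ i j : Fin 2,
      star (A 0 i) * (A 0 j) + star (A 1 i) * (A 1 j) = if i = j then 1 else 0 := by
    intro A hA i j
    have h := congrFun (congrFun hA i) j
    simpa [Matrix.mul_apply, Fin.sum_univ_two, Matrix.conjTranspose_apply,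
      Matrix.one_apply] using h
  have hhalf : ∀ z : ℂ, ‖((1/Real.sqrt 2:ℝ):ℂ) * z‖^2 = ‖z‖^2/2 := fun z => by
    rw [norm_mul, mul_pow, Complex.norm_real, Real.norm_eq_abs, abs_of_pos ht0, ht2]; ring
  have hdouble : ∀ z : ℂ, ‖((Real.sqrt 2:ℝ):ℂ) * z‖^2/2 = ‖z‖^2 := fun z => by
    rw [norm_mul, mul_pow, Complex.norm_real, Real.norm_eq_abs,
      abs_of_pos (by positivity : (0:ℝ) < Real.sqrt 2), Real.sq_sqrt (by norm_num : (0:ℝ) ≤ 2)]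
    ring
  intro x
  fin_cases b
  · -- b = 0 : hypothesis about kets, goal about Hadamard columns
    have e1 := entry M hMM' 0 0
    have e2 := entry M hMM' 1 1
    have e3 := entry M hMM' 0 1
    simp only [hM, Matrix.cons_val', Matrix.cons_val_zero, Matrix.cons_val_one,
      Matrix.head_cons, Matrix.head_fin_const, Matrix.empty_val', Matrix.cons_val_fin_one,
      if_pos rfl, if_true, ite_true, Matrix.of_apply] at e1 e2 e3
    have hb' : 1/Real.sqrt 2 ≤ |‖star (v 0)‖^2 - ‖star (w 0)‖^2| := by
      have h := hbig 0
      simpa [show (((0:Fin 2):ℕ)) = 0 from rfl, pow_zero, Matrix.one_mulVec, dotc, ket] using h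
    have hkey := key (star (v 0)) (star (v 1)) (star (w 0)) (star (w 1))
      (by simpa using e1) (by simpa using e2) (by simpa using e3) hb'
    have hv0 : dotc v (Hmat.mulVec (ket 0)) =
        ((1/Real.sqrt 2:ℝ):ℂ) * (star (v 0) + star (v 1)) := by
      simp [dotc, Hmat, Matrix.mulVec, dotProduct, ket, Fin.sum_univ_two]; ring
    have hw0 : dotc w (Hmat.mulVec (ket 0)) =
        ((1/Real.sqrt 2:ℝ):ℂ) * (star (w 0) + star (w 1)) := by
      simp [dotc, Hmat, Matrix.mulVec, dotProduct, ket, Fin.sum_univ_two]; ring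
    have hv1 : dotc v (Hmat.mulVec (ket 1)) =
        ((1/Real.sqrt 2:ℝ):ℂ) * (star (v 0) - star (v 1)) := by
      simp [dotc, Hmat, Matrix.mulVec, dotProduct, ket, Fin.sum_univ_two]; ring
    have hw1 : dotc w (Hmat.mulVec (ket 1)) =
        ((1/Real.sqrt 2:ℝ):ℂ) * (star (w 0) - star (w 1)) := by
      simp [dotc, Hmat, Matrix.mulVec, dotProduct, ket, Fin.sum_univ_two]; ring
    fin_cases x
    · have h := hkey.1
      rw [← hhalf, ← hhalf, ← hv0, ← hw0] at h
      simpa [show (((0+1:Fin 2):ℕ)) = 1 from rfl, pow_one] using h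
    · have h := hkey.2
      rw [← hhalf, ← hhalf, ← hv1, ← hw1] at h
      simpa [show (((0+1:Fin 2):ℕ)) = 1 from rfl, pow_one] using h
  · -- b = 1 : hypothesis about Hadamard columns, goal about kets
    set N := M * Hmat with hNdef
    have e1 := entry N hNN 0 0
    have e2 := entry N hNN 1 1
    have e3 := entry N hNN 0 1
    simp only [if_pos rfl, if_true, ite_true] at e1 e2 e3
    have hb' : 1/Real.sqrt 2 ≤ |‖N 0 0‖^2 - ‖N 1 0‖^2| := by
      have h := hbig 0
      have hv' : dotc v (Hmat.mulVec (ket 0)) = N 0 0 := by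
        simp [dotc, hNdef, hM, Hmat, Matrix.mul_apply, Matrix.mulVec, dotProduct,
          ket, Fin.sum_univ_two]
      have hw' : dotc w (Hmat.mulVec (ket 0)) = N 1 0 := by
        simp [dotc, hNdef, hM, Hmat, Matrix.mul_apply, Matrix.mulVec, dotProduct,
          ket, Fin.sum_univ_two]
      simp only [show (((1:Fin 2):ℕ)) = 1 from rfl, pow_one, hv', hw'] at h; simpa using h
    have hkey := key (N 0 0) (N 0 1) (N 1 0) (N 1 1) (by simpa using e1)
      (by simpa using e2) (by simpa using e3) hb'
    have hr2 : ((Real.sqrt 2:ℝ):ℂ) = 2 * ((1/Real.sqrt 2:ℝ):ℂ) := by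
      have hr : Real.sqrt 2 = 2 * (1 / Real.sqrt 2) := by
        rw [mul_one_div, eq_div_iff (ne_of_gt (by positivity : (0:ℝ) < Real.sqrt 2))]
        linarith [hs2]
      exact_mod_cast hr
    have n00 : N 0 0 = ((1/Real.sqrt 2:ℝ):ℂ) * (star (v 0) + star (v 1)) := by
      simp [hNdef, hM, Hmat, Matrix.mul_apply, Fin.sum_univ_two]; ring
    have n01 : N 0 1 = ((1/Real.sqrt 2:ℝ):ℂ) * (star (v 0) - star (v 1)) := by
      simp [hNdef, hM, Hmat, Matrix.mul_apply, Fin.sum_univ_two]; ring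
    have n10 : N 1 0 = ((1/Real.sqrt 2:ℝ):ℂ) * (star (w 0) + star (w 1)) := by
      simp [hNdef, hM, Hmat, Matrix.mul_apply, Fin.sum_univ_two]; ring
    have n11 : N 1 1 = ((1/Real.sqrt 2:ℝ):ℂ) * (star (w 0) - star (w 1)) := by
      simp [hNdef, hM, Hmat, Matrix.mul_apply, Fin.sum_univ_two]; ring
    have hv0 : N 0 0 + N 0 1 = ((Real.sqrt 2:ℝ):ℂ) * star (v 0) := by
      rw [n00, n01, hr2]; ring
    have hw0 : N 1 0 + N 1 1 = ((Real.sqrt 2:ℝ):ℂ) * star (w 0) := by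
      rw [n10, n11, hr2]; ring
    have hv1 : N 0 0 - N 0 1 = ((Real.sqrt 2:ℝ):ℂ) * star (v 1) := by
      rw [n00, n01, hr2]; ring
    have hw1 : N 1 0 - N 1 1 = ((Real.sqrt 2:ℝ):ℂ) * star (w 1) := by
      rw [n10, n11, hr2]; ring
    fin_cases x
    · have h := hkey.1
      rw [hv0, hw0, hdouble, hdouble] at h
      simpa [show (((1+1:Fin 2):ℕ)) = 0 from rfl, pow_zero, Matrix.one_mulVec, dotc, ket] using h
    · have h := hkey.2
      rw [hv1, hw1, hdouble, hdouble] at h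
      simpa [show (((1+1:Fin 2):ℕ)) = 0 from rfl, pow_zero, Matrix.one_mulVec, dotc, ket] using h
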